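/- Let Φ : M_n(ℂ) → M_n(ℂ) be a linear, positive, trace-preserving map, let ρ° be a state with Φ(ρ°) = ρ°, and let ε ∈ (0,1] be such that Φ(ρ) ≥ ε·ρ° (Loewner order) for every state ρ. Then for every natural number k and every state ρ, ‖Φ^k(ρ) − ρ°‖₁ ≤ (1 − ε)^k · ‖ρ − ρ°‖₁, where Φ^k denotes the k-fold composition of Φ. -/

import Mathlib

open scoped ComplexOrder

/-- The trace norm of a matrix: `‖A‖₁ = Tr √(Aᴴ A)`.  For a Hermitian matrix this is
the sum of the absolute values of its eigenvalues. -/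
noncomputable def traceNorm {n : ℕ} (A : Matrix (Fin n) (Fin n) ℂ) : ℝ :=
  ((Matrix.posSemidef_conjTranspose_mul_self A).1.eigenvectorUnitary.1 *
    Matrix.diagonal (((↑) : ℝ → ℂ) ∘ (√·) ∘ (Matrix.posSemidef_conjTranspose_mul_self A).1.eigenvalues) *
    (star (Matrix.posSemidef_conjTranspose_mul_self A).1.eigenvectorUnitary :
      Matrix (Fin n) (Fin n) ℂ)).trace.re

namespace DoeblinAux

open Matrix

variable {n : ℕ} {A : Matrix (Fin n) (Fin n) ℂ}

lemma trace_nonneg_of_psd {M : Matrix (Fin n) (Fin n) ℂ} (hM : M.PosSemidef) :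
    (0 : ℂ) ≤ M.trace := by
  exact hM.trace_nonneg

lemma trace_mul_nonneg {X Y : Matrix (Fin n) (Fin n) ℂ} (hX : X.PosSemidef)
    (hY : Y.PosSemidef) : (0 : ℂ) ≤ (X * Y).trace := by
  obtain ⟨C, rfl⟩ : ∃ C : Matrix (Fin n) (Fin n) ℂ, X = Cᴴ * C := by
    open scoped MatrixOrder Matrix.Norms.L2Operator in
    exact CStarAlgebra.nonneg_iff_eq_star_mul_self.mp hX.nonneg
  rw [Matrix.mul_assoc, Matrix.trace_mul_comm]
  exact trace_nonneg_of_psd (by simpa [Matrix.mul_assoc] using hY.mul_mul_conjTranspose_same C)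

lemma psd_smul {M : Matrix (Fin n) (Fin n) ℂ} (hM : M.PosSemidef) {c : ℝ} (hc : 0 ≤ c) :
    ((c : ℂ) • M).PosSemidef := by
  exact hM.smul (Complex.zero_le_real.2 hc)

/-- Functional calculus of a Hermitian matrix. -/
noncomputable def dfun (hA : A.IsHermitian) (f : ℝ → ℝ) : Matrix (Fin n) (Fin n) ℂ :=
  (hA.eigenvectorUnitary : Matrix (Fin n) (Fin n) ℂ) *
    Matrix.diagonal (fun i => (f (hA.eigenvalues i) : ℂ)) *
    (hA.eigenvectorUnitary : Matrix (Fin n) (Fin n) ℂ)ᴴ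

lemma dfun_id (hA : A.IsHermitian) : dfun hA (fun x => x) = A := by
  have h := hA.spectral_theorem
  rw [Unitary.conjStarAlgAut_apply] at h
  rw [dfun]
  exact h.symm

lemma dfun_congr (hA : A.IsHermitian) {f g : ℝ → ℝ}
    (h : ∀ i, f (hA.eigenvalues i) = g (hA.eigenvalues i)) : dfun hA f = dfun hA g := by
  unfold dfun
  rw [congrArg Matrix.diagonal (funext fun i => by rw [h i] :
    (fun i => (f (hA.eigenvalues i) : ℂ)) = fun i => (g (hA.eigenvalues i) : ℂ))]

lemma dfun_psd (hA : A.IsHermitian) {f : ℝ → ℝ} (hf : ∀ x, 0 ≤ f x) :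
    (dfun hA f).PosSemidef :=
  (Matrix.PosSemidef.diagonal fun i => Complex.zero_le_real.2 (hf _)).mul_mul_conjTranspose_same _

lemma dfun_trace (hA : A.IsHermitian) (f : ℝ → ℝ) :
    (dfun hA f).trace = ((∑ i, f (hA.eigenvalues i) : ℝ) : ℂ) := by
  rw [dfun, Matrix.trace_mul_cycle, ← star_eq_conjTranspose,
    Matrix.UnitaryGroup.star_mul_self, Matrix.one_mul, Matrix.trace_diagonal]
  push_cast
  rfl

lemma dfun_mul (hA : A.IsHermitian) (f g : ℝ → ℝ) :
    dfun hA f * dfun hA g = dfun hA (fun x => f x * g x) := by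
  have hU : (hA.eigenvectorUnitary : Matrix (Fin n) (Fin n) ℂ)ᴴ *
      (hA.eigenvectorUnitary : Matrix (Fin n) (Fin n) ℂ) = 1 := by
    rw [← star_eq_conjTranspose]; exact Matrix.UnitaryGroup.star_mul_self _
  simp only [dfun, Matrix.mul_assoc]
  rw [← Matrix.mul_assoc ((hA.eigenvectorUnitary : Matrix (Fin n) (Fin n) ℂ)ᴴ), hU,
    Matrix.one_mul, ← Matrix.mul_assoc (Matrix.diagonal _), Matrix.diagonal_mul_diagonal]
  congr 2
  ext i
  push_cast
  rfl

lemma dfun_sub (hA : A.IsHermitian) (f g : ℝ → ℝ) :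
    dfun hA f - dfun hA g = dfun hA (fun x => f x - g x) := by
  unfold dfun
  rw [← Matrix.sub_mul, ← Matrix.mul_sub, Matrix.diagonal_sub]
  congr 2
  ext i
  push_cast
  rfl

lemma dfun_add (hA : A.IsHermitian) (f g : ℝ → ℝ) :
    dfun hA f + dfun hA g = dfun hA (fun x => f x + g x) := by
  unfold dfun
  rw [← Matrix.add_mul, ← Matrix.mul_add, Matrix.diagonal_add]
  congr 2
  ext i
  push_cast
  rfl

lemma dfun_one (hA : A.IsHermitian) : dfun hA (fun _ => 1) = 1 := by
  unfold dfun
  rw [show (Matrix.diagonal (fun i => ((1 : ℝ) : ℂ))) = 1 by simp, Matrix.mul_one,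
    ← star_eq_conjTranspose]
  exact (Matrix.mem_unitaryGroup_iff).mp hA.eigenvectorUnitary.2

lemma dfun_zero (hA : A.IsHermitian) : dfun hA (fun _ => 0) = 0 := by
  unfold dfun
  rw [show (Matrix.diagonal (fun i => ((0 : ℝ) : ℂ))) = 0 by simp, Matrix.mul_zero,
    Matrix.zero_mul]

lemma dfun_eq_cfc (hA : A.IsHermitian) (f : ℝ → ℝ) : dfun hA f = cfc f A := by
  rw [hA.cfc_eq, IsHermitian.cfc, Unitary.conjStarAlgAut_apply]
  rfl

lemma traceNorm_eq_sum_aux (hA : A.IsHermitian) :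
    traceNorm A = ∑ i, |hA.eigenvalues i| := by
  have hB := (Matrix.posSemidef_conjTranspose_mul_self A).1
  have h1 : traceNorm A = (cfc Real.sqrt (Aᴴ * A)).trace.re := by
    rw [hB.cfc_eq, IsHermitian.cfc, Unitary.conjStarAlgAut_apply]
    rfl
  have hA' : IsSelfAdjoint A := hA
  have h2 : Aᴴ * A = cfc (fun x : ℝ => x * x) A := by
    rw [cfc_mul (fun x : ℝ => x) (fun x : ℝ => x) A, cfc_id' ℝ A, hA.eq]
  rw [h1, h2, ← cfc_comp Real.sqrt (fun x : ℝ => x * x) A,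
    cfc_congr (f := Real.sqrt ∘ fun x : ℝ => x * x) (g := fun x : ℝ => |x|) (fun x _ => Real.sqrt_mul_self_eq_abs x),
    ← dfun_eq_cfc hA, dfun_trace, Complex.ofReal_re]

lemma traceNorm_psd {M : Matrix (Fin n) (Fin n) ℂ} (hM : M.PosSemidef) :
    traceNorm M = M.trace.re := by
  rw [traceNorm_eq_sum_aux hM.1, hM.1.trace_eq_sum_eigenvalues]
  simp only [Complex.re_sum, RCLike.ofReal_re]
  exact Finset.sum_congr rfl fun i _ => abs_of_nonneg (hM.eigenvalues_nonneg i)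

lemma traceNorm_eq_sum (hA : A.IsHermitian) :
    traceNorm A = ∑ i, |hA.eigenvalues i| := by
  have hM : (dfun hA (fun x => |x|)).PosSemidef := dfun_psd hA fun x => abs_nonneg x
  have hsq : (dfun hA (fun x => |x|)) ^ 2 = Aᴴ * A := by
    rw [pow_two, dfun_mul, hA.eq]
    have h1 : (fun x : ℝ => |x| * |x|) = fun x : ℝ => x * x := by
      funext x; exact abs_mul_abs_self x
    rw [h1, ← dfun_mul, dfun_id]
  exact traceNorm_eq_sum_aux hA

lemma traceNorm_sub_le {X Y : Matrix (Fin n) (Fin n) ℂ} (hX : X.PosSemidef)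
    (hY : Y.PosSemidef) : traceNorm (X - Y) ≤ X.trace.re + Y.trace.re := by
  have hA : (X - Y).IsHermitian := hX.1.sub hY.1
  set s : ℝ → ℝ := fun x => if 0 ≤ x then 1 else -1 with hs
  set S := dfun hA s with hS
  have habs : S * (X - Y) = dfun hA (fun x => |x|) := by
    calc S * (X - Y) = S * dfun hA (fun x => x) := by rw [dfun_id]
    _ = dfun hA (fun x => s x * x) := dfun_mul hA s _
    _ = dfun hA (fun x => |x|) := by
        refine dfun_congr hA fun i => ?_
        by_cases h : 0 ≤ hA.eigenvalues i
        · simp [s, h, abs_of_nonneg h]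
        · simp [s, h, abs_of_neg (lt_of_not_ge h)]
  have hSle : ∀ {Z : Matrix (Fin n) (Fin n) ℂ}, Z.PosSemidef → (S * Z).trace.re ≤ Z.trace.re := by
    intro Z hZ
    have h1S : (1 - S).PosSemidef := by
      rw [show (1 : Matrix (Fin n) (Fin n) ℂ) - S = dfun hA (fun x => 1 - s x) by
        rw [hS, ← dfun_one hA, dfun_sub]]
      refine dfun_psd hA fun x => ?_
      by_cases h : 0 ≤ x <;> simp [s, h] <;> norm_num
    have h2 := trace_mul_nonneg h1S hZ
    rw [Matrix.sub_mul, Matrix.one_mul, Matrix.trace_sub] at h2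
    have := (Complex.le_def.1 h2).1
    simp only [Complex.zero_re, Complex.sub_re] at this
    linarith
  have hSge : ∀ {Z : Matrix (Fin n) (Fin n) ℂ}, Z.PosSemidef → -Z.trace.re ≤ (S * Z).trace.re := by
    intro Z hZ
    have h1S : (1 + S).PosSemidef := by
      rw [show (1 : Matrix (Fin n) (Fin n) ℂ) + S = dfun hA (fun x => 1 + s x) by
        rw [hS, ← dfun_one hA, dfun_add]]
      refine dfun_psd hA fun x => ?_
      by_cases h : 0 ≤ x <;> simp [s, h] <;> norm_num
    have h2 := trace_mul_nonneg h1S hZ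
    rw [Matrix.add_mul, Matrix.one_mul, Matrix.trace_add] at h2
    have := (Complex.le_def.1 h2).1
    simp only [Complex.zero_re, Complex.add_re] at this
    linarith
  have htn : traceNorm (X - Y) = (S * (X - Y)).trace.re := by
    rw [habs, traceNorm_eq_sum hA, dfun_trace, Complex.ofReal_re]
  rw [htn, Matrix.mul_sub, Matrix.trace_sub, Complex.sub_re]
  have h1 := hSle hX
  have h2 := hSge hY
  linarith

lemma eq_zero_of_eigenvalues_zero (hA : A.IsHermitian)
    (h : ∀ i, hA.eigenvalues i = 0) : A = 0 := by
  rw [← dfun_id hA, dfun_congr hA (g := fun _ => 0) (fun i => h i), dfun_zero]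

end DoeblinAux

open DoeblinAux Matrix in
/-- One-step contraction. -/
lemma doeblin_step {n : ℕ}
    (Φ : Module.End ℂ (Matrix (Fin n) (Fin n) ℂ))
    (htr : ∀ A : Matrix (Fin n) (Fin n) ℂ, (Φ A).trace = A.trace)
    (ρ₀ : Matrix (Fin n) (Fin n) ℂ) (hρ₀ : ρ₀.PosSemidef) (hρ₀tr : ρ₀.trace = 1)
    (hfix : Φ ρ₀ = ρ₀)
    (ε : ℝ) (hε0 : 0 < ε) (hε1 : ε ≤ 1)
    (hDoeblin : ∀ ρ : Matrix (Fin n) (Fin n) ℂ, ρ.PosSemidef → ρ.trace = 1 →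
      (Φ ρ - (ε : ℂ) • ρ₀).PosSemidef)
    (ρ : Matrix (Fin n) (Fin n) ℂ) (hρ : ρ.PosSemidef) (hρtr : ρ.trace = 1) :
    traceNorm (Φ ρ - ρ₀) ≤ (1 - ε) * traceNorm (ρ - ρ₀) := by
  have hA : (ρ - ρ₀).IsHermitian := hρ.1.sub hρ₀.1
  set lam := hA.eigenvalues with hlam
  set P := dfun hA (fun x => max x 0) with hPdef
  set N := dfun hA (fun x => max (-x) 0) with hNdef
  have hPpsd : P.PosSemidef := dfun_psd hA fun x => le_max_right _ _
  have hNpsd : N.PosSemidef := dfun_psd hA fun x => le_max_right _ _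
  have hfun : (fun x : ℝ => max x 0 - max (-x) 0) = fun x => x := by
    funext x
    rcases le_total 0 x with h | h
    · rw [max_eq_left h, max_eq_right (neg_nonpos.2 h)]; ring
    · rw [max_eq_right h, max_eq_left (neg_nonneg.2 h)]; ring
  have hPN : P - N = ρ - ρ₀ := by
    rw [hPdef, hNdef, dfun_sub, hfun, dfun_id]
  set tp : ℝ := ∑ i, max (lam i) 0 with htp
  set tn : ℝ := ∑ i, max (-(lam i)) 0 with htn
  have hPtr : P.trace = (tp : ℂ) := dfun_trace hA _
  have hNtr : N.trace = (tn : ℂ) := dfun_trace hA _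
  have htr0 : (ρ - ρ₀).trace = 0 := by rw [Matrix.trace_sub, hρtr, hρ₀tr, sub_self]
  have htpn : tp = tn := by
    have := congrArg Matrix.trace hPN
    rw [Matrix.trace_sub, hPtr, hNtr, htr0, sub_eq_zero] at this
    exact_mod_cast this
  have hTN : traceNorm (ρ - ρ₀) = tp + tn := by
    rw [traceNorm_eq_sum hA, htp, htn, ← Finset.sum_add_distrib]
    congr 1
    funext i
    rcases le_total 0 (lam i) with h | h
    · rw [abs_of_nonneg h, max_eq_left h, max_eq_right (neg_nonpos.2 h), add_zero]
    · rw [abs_of_nonpos h, max_eq_right h, max_eq_left (neg_nonneg.2 h), zero_add]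
  have htpnn : 0 ≤ tp := Finset.sum_nonneg fun i _ => le_max_right _ _
  rcases eq_or_lt_of_le htpnn with h0 | hpos'
  · -- tp = 0 : then ρ = ρ₀
    have h1 := (Finset.sum_eq_zero_iff_of_nonneg
      (fun i _ => le_max_right (lam i) 0)).1 h0.symm
    have htn0 : tn = 0 := by rw [← htpn, ← h0]
    have h2 := (Finset.sum_eq_zero_iff_of_nonneg
      (fun i _ => le_max_right (-(lam i)) 0)).1 (htn.symm.trans htn0)
    have hz : ∀ i, hA.eigenvalues i = 0 := by
      intro i
      have ha : lam i ≤ 0 := sup_eq_right.mp (h1 i (Finset.mem_univ i))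
      have hb : -(lam i) ≤ 0 := sup_eq_right.mp (h2 i (Finset.mem_univ i))
      rw [hlam] at ha hb
      linarith
    have hρeq : ρ = ρ₀ := by
      have h3 := eq_zero_of_eigenvalues_zero hA hz
      rwa [sub_eq_zero] at h3
    have hL : Φ ρ - ρ₀ = 0 := by rw [hρeq, hfix, sub_self]
    have h0tn : traceNorm (0 : Matrix (Fin n) (Fin n) ℂ) = 0 := by
      rw [traceNorm_psd Matrix.PosSemidef.zero, Matrix.trace_zero, Complex.zero_re]
    rw [hL, h0tn]
    have h4 : 0 ≤ traceNorm (ρ - ρ₀) := by rw [hTN]; rw [← htpn, ← h0]; norm_num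
    nlinarith
  · have key : ∀ Q : Matrix (Fin n) (Fin n) ℂ, Q.PosSemidef → Q.trace = (tp : ℂ) →
        (Φ Q - ((ε * tp : ℝ) : ℂ) • ρ₀).PosSemidef := by
      intro Q hQ hQtr
      have htne : (tp : ℝ) ≠ 0 := ne_of_gt hpos'
      set σ : Matrix (Fin n) (Fin n) ℂ := ((tp⁻¹ : ℝ) : ℂ) • Q with hσ
      have hσpsd : σ.PosSemidef := psd_smul hQ (inv_nonneg.2 htpnn)
      have hσtr : σ.trace = 1 := by
        rw [hσ, Matrix.trace_smul, hQtr, smul_eq_mul, ← Complex.ofReal_mul,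
          inv_mul_cancel₀ htne, Complex.ofReal_one]
      have hD := hDoeblin σ hσpsd hσtr
      have hscaled := psd_smul hD htpnn
      have heq : ((tp : ℂ)) • (Φ σ - (ε : ℂ) • ρ₀) = Φ Q - ((ε * tp : ℝ) : ℂ) • ρ₀ := by
        rw [smul_sub, ← _root_.map_smul, hσ, smul_smul, ← Complex.ofReal_mul,
          mul_inv_cancel₀ htne, Complex.ofReal_one, one_smul, smul_smul]
        congr 2
        push_cast
        ring
      rwa [heq] at hscaled
    have hX := key P hPpsd hPtr
    have hY := key N hNpsd (by rw [hNtr, htpn])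
    have hXY : (Φ P - ((ε * tp : ℝ) : ℂ) • ρ₀) - (Φ N - ((ε * tp : ℝ) : ℂ) • ρ₀)
        = Φ ρ - ρ₀ := by
      rw [sub_sub_sub_cancel_right, ← map_sub, hPN, map_sub, hfix]
    have hle := traceNorm_sub_le hX hY
    rw [hXY] at hle
    have hXtr : (Φ P - ((ε * tp : ℝ) : ℂ) • ρ₀).trace = ((tp - ε * tp : ℝ) : ℂ) := by
      rw [Matrix.trace_sub, Matrix.trace_smul, htr, hPtr, hρ₀tr, smul_eq_mul, mul_one]
      push_cast
      ring
    have hYtr : (Φ N - ((ε * tp : ℝ) : ℂ) • ρ₀).trace = ((tp - ε * tp : ℝ) : ℂ) := by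
      rw [Matrix.trace_sub, Matrix.trace_smul, htr, hNtr, ← htpn, hρ₀tr, smul_eq_mul, mul_one]
      push_cast
      ring
    rw [hXtr, hYtr, Complex.ofReal_re] at hle
    rw [hTN, ← htpn]
    linarith

open DoeblinAux Matrix in
/-- Exponential mixing of the iterates of a positive trace-preserving map satisfying a
Doeblin-type minorization: `‖Φ^k(ρ) − ρ°‖₁ ≤ (1−ε)^k ‖ρ − ρ°‖₁`. -/
theorem doeblin_iterated_contraction {n : ℕ}
    (Φ : Module.End ℂ (Matrix (Fin n) (Fin n) ℂ))
    (hpos : ∀ A : Matrix (Fin n) (Fin n) ℂ, A.PosSemidef → (Φ A).PosSemidef)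
    (htr : ∀ A : Matrix (Fin n) (Fin n) ℂ, (Φ A).trace = A.trace)
    (ρ₀ : Matrix (Fin n) (Fin n) ℂ) (hρ₀ : ρ₀.PosSemidef) (hρ₀tr : ρ₀.trace = 1)
    (hfix : Φ ρ₀ = ρ₀)
    (ε : ℝ) (hε0 : 0 < ε) (hε1 : ε ≤ 1)
    (hDoeblin : ∀ ρ : Matrix (Fin n) (Fin n) ℂ, ρ.PosSemidef → ρ.trace = 1 →
      (Φ ρ - (ε : ℂ) • ρ₀).PosSemidef)
    (k : ℕ)
    (ρ : Matrix (Fin n) (Fin n) ℂ) (hρ : ρ.PosSemidef) (hρtr : ρ.trace = 1) :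
    traceNorm ((Φ ^ k) ρ - ρ₀) ≤ (1 - ε) ^ k * traceNorm (ρ - ρ₀) := by
  induction k generalizing ρ with
  | zero => simp
  | succ k ih =>
    have hΦρ : (Φ ρ).PosSemidef := hpos ρ hρ
    have hΦρtr : (Φ ρ).trace = 1 := by rw [htr, hρtr]
    have h1 : ((Φ ^ (k + 1)) ρ) = (Φ ^ k) (Φ ρ) := by
      rw [pow_succ, Module.End.mul_apply]
    rw [h1]
    calc traceNorm ((Φ ^ k) (Φ ρ) - ρ₀) ≤ (1 - ε) ^ k * traceNorm (Φ ρ - ρ₀) :=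
          ih (Φ ρ) hΦρ hΦρtr
    _ ≤ (1 - ε) ^ k * ((1 - ε) * traceNorm (ρ - ρ₀)) := by
        apply mul_le_mul_of_nonneg_left
          (doeblin_step Φ htr ρ₀ hρ₀ hρ₀tr hfix ε hε0 hε1 hDoeblin ρ hρ hρtr)
          (pow_nonneg (by linarith) k)
    _ = (1 - ε) ^ (k + 1) * traceNorm (ρ - ρ₀) := by ring
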